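/- Let (γ_n)_{n≥0} be a sequence of real numbers, let T : ℝ[x] → ℝ[x] be the linear operator determined by T[L_n] = γ_n L_n for every n, let (Q_k)_{k≥0} be the differential coefficients of T, and set g_k*(−1) = Σ_{j=0}^{k} C(k,j) (−1)^{k−j} γ_j. Then for all n, k ∈ ℕ₀: Q_{k+n}^{(k)}(0) = ((−1)^n/n!) Σ_{j=0}^{n} C(n,j) · ((k+j)!/((k+j)−n)!) · g_{k+j}*(−1), where the factor (k+j)!/((k+j)−n)! is interpreted as 0 when k+j < n. Consequently, with b_{n,m} = Σ_{k=0}^{m} C(m,k) Q_{k+n}^{(k)}(0), one has b_{n,m} = Σ_{k=0}^{m} C(m,k) ((−1)^n/n!) Σ_{j=0}^{n} C(n,j) ((k+j)!/((k+j)−n)!) g_{k+j}*(−1) for all n, m ∈ ℕ₀. -/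

import Mathlib

open Polynomial Finset

noncomputable section

/-- The physicists' Hermite polynomials. -/
def hermitePoly (n : ℕ) : Polynomial ℝ :=
  ∑ k ∈ Finset.range (n / 2 + 1),
    Polynomial.C ((-1 : ℝ) ^ k * n.factorial * 2 ^ (n - 2 * k) /
      (k.factorial * (n - 2 * k).factorial)) * Polynomial.X ^ (n - 2 * k)

/-- The Laguerre polynomials. -/
def laguerrePoly (n : ℕ) : Polynomial ℝ :=
  ∑ k ∈ Finset.range (n + 1),
    Polynomial.C ((-1 : ℝ) ^ k / k.factorial * n.choose k) * Polynomial.X ^ k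

/-- A real polynomial is hyperbolic if all of its complex roots are real
(the zero polynomial counts as hyperbolic). -/
def Hyperbolic (p : Polynomial ℝ) : Prop :=
  p = 0 ∨ ∀ z : ℂ, Polynomial.aeval z p = 0 → z.im = 0

/-- A linear operator on ℝ[x] preserves hyperbolicity. -/
def HypPreserving (T : Polynomial ℝ →ₗ[ℝ] Polynomial ℝ) : Prop :=
  ∀ p : Polynomial ℝ, Hyperbolic p → Hyperbolic (T p)

/-- Classical multiplier sequence. -/
def ClassicalMS (γ : ℕ → ℝ) : Prop :=
  ∃ T : Polynomial ℝ →ₗ[ℝ] Polynomial ℝ,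
    (∀ n, T (Polynomial.X ^ n) = γ n • Polynomial.X ^ n) ∧ HypPreserving T

/-- Hermite multiplier sequence. -/
def HermiteMS (γ : ℕ → ℝ) : Prop :=
  ∃ T : Polynomial ℝ →ₗ[ℝ] Polynomial ℝ,
    (∀ n, T (hermitePoly n) = γ n • hermitePoly n) ∧ HypPreserving T

/-- Laguerre multiplier sequence. -/
def LaguerreMS (γ : ℕ → ℝ) : Prop :=
  ∃ T : Polynomial ℝ →ₗ[ℝ] Polynomial ℝ,
    (∀ n, T (laguerrePoly n) = γ n • laguerrePoly n) ∧ HypPreserving T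

/-- A sequence is trivial if all entries vanish except possibly two at consecutive indices. -/
def TrivialSeq (γ : ℕ → ℝ) : Prop :=
  ∃ m : ℕ, ∀ n, n ≠ m → n ≠ m + 1 → γ n = 0

section Helpers


lemma neg_one_pow_sub {u M : ℕ} (h : u ≤ M) : (-1:ℝ)^(M-u) = (-1)^M * (-1)^u := by
  have h2 : (-1:ℝ)^u * (-1)^u = 1 := by
    rw [← pow_add]; exact Even.neg_one_pow ⟨u, rfl⟩
  calc (-1:ℝ)^(M-u) = (-1:ℝ)^(M-u) * ((-1:ℝ)^u * (-1)^u) := by rw [h2, mul_one]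
    _ = (-1)^M * (-1)^u := by rw [← mul_assoc, ← pow_add, Nat.sub_add_cancel h]

lemma alt_sum (M : ℕ) :
    ∑ u ∈ range (M+1), (-1:ℝ)^u * (M.choose u) = if M = 0 then 1 else 0 := by
  have h := @Int.alternating_sum_range_choose M
  have h2 : ((∑ i ∈ range (M + 1), (-1:ℤ) ^ i * ↑(M.choose i) : ℤ) : ℝ)
      = ∑ u ∈ range (M+1), (-1:ℝ)^u * (M.choose u) := by push_cast; rfl
  rw [← h2, h]
  split <;> simp

lemma I1 (m i : ℕ) :
    ∑ j ∈ range (m+1), (-1:ℝ)^j * (m.choose j) * (j.choose i) =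
      if i = m then (-1:ℝ)^m else 0 := by
  by_cases him : i ≤ m
  · have hsub : Finset.Ico i (m+1) ⊆ range (m+1) := by
      intro x hx; simp at hx ⊢; omega
    have hzero : ∀ x ∈ range (m+1), x ∉ Finset.Ico i (m+1) →
        (-1:ℝ)^x * (m.choose x) * (x.choose i) = 0 := by
      intro x hx hx2
      simp only [mem_range] at hx
      simp only [Finset.mem_Ico] at hx2
      have : x < i := by omega
      rw [Nat.choose_eq_zero_of_lt this]; simp
    rw [← Finset.sum_subset hsub hzero, Finset.sum_Ico_eq_sum_range]
    have hrw : ∀ u ∈ range (m + 1 - i), (-1:ℝ)^(i+u) * (m.choose (i+u)) * ((i+u).choose i)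
        = ((-1:ℝ)^i * (m.choose i)) * ((-1:ℝ)^u * ((m-i).choose u)) := by
      intro u hu
      simp only [mem_range] at hu
      have h1 : i + u ≤ m := by omega
      have h2 : i ≤ i + u := by omega
      have := Nat.choose_mul (n := m) h2
      simp only [Nat.add_sub_cancel_left] at this
      rw [pow_add]
      have h3 := congrArg (fun x : ℕ => (x : ℝ)) this
      push_cast at h3
      linear_combination ((-1:ℝ)^i * (-1)^u) * h3
    rw [Finset.sum_congr rfl hrw, ← Finset.mul_sum]
    have : m + 1 - i = (m - i) + 1 := by omega
    rw [this, alt_sum (m-i)]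
    by_cases h : i = m
    · subst h; simp
    · have : ¬ (m - i = 0) := by omega
      simp [h, this]
  · have : ∀ j ∈ range (m+1), (-1:ℝ)^j * (m.choose j) * (j.choose i) = 0 := by
      intro j hj; simp only [mem_range] at hj
      rw [Nat.choose_eq_zero_of_lt (by omega : j < i)]; simp
    rw [Finset.sum_congr rfl this]
    have : ¬ (i = m) := by omega
    simp [this]


lemma J (M s r : ℕ) :
    ∑ u ∈ range (M+1), (-1:ℝ)^u * (M.choose u) * ((s+u).choose r) =
      (-1:ℝ)^M * (if M ≤ r then ((s.choose (r-M)):ℝ) else 0) := by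
  have hX : ((X : ℝ[X]) + 1 + (-1))^M = X^M := by ring_nf
  have h1 : (X:ℝ[X])^M * (X+1)^s =
      ∑ u ∈ range (M+1), Polynomial.C ((-1:ℝ)^(M-u) * (M.choose u)) * (X+1)^(s+u) := by
    rw [← hX, add_pow]
    rw [Finset.sum_mul]
    refine Finset.sum_congr rfl (fun u hu => ?_)
    have : ((-1 : ℝ[X]))^(M-u) = Polynomial.C ((-1:ℝ)^(M-u)) := by
      rw [map_pow, map_neg, map_one]
    rw [this, pow_add]
    have : ((M.choose u : ℕ) : ℝ[X]) = Polynomial.C ((M.choose u : ℕ) : ℝ) := by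
      simp
    rw [this, map_mul]
    ring
  have h2 := congrArg (fun p : ℝ[X] => p.coeff r) h1
  simp only [finset_sum_coeff, coeff_C_mul] at h2
  rw [mul_comm ((X:ℝ[X])^M)] at h2
  rw [Polynomial.coeff_mul_X_pow'] at h2
  have hc : ∀ u ∈ range (M+1),
      (-1:ℝ)^(M-u) * (M.choose u) * ((X+1:ℝ[X])^(s+u)).coeff r
      = (-1)^M * ((-1:ℝ)^u * (M.choose u) * ((s+u).choose r)) := by
    intro u hu
    simp only [mem_range] at hu
    rw [coeff_X_add_one_pow, neg_one_pow_sub (by omega : u ≤ M)]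
    ring
  rw [Finset.sum_congr rfl hc, ← Finset.mul_sum] at h2
  have hmul : (-1:ℝ)^M * ((-1:ℝ)^M *
      (∑ u ∈ range (M+1), (-1:ℝ)^u * (M.choose u) * ((s+u).choose r))) =
      ∑ u ∈ range (M+1), (-1:ℝ)^u * (M.choose u) * ((s+u).choose r) := by
    rw [← mul_assoc, ← pow_add]
    rw [Even.neg_one_pow ⟨M, rfl⟩, one_mul]
  rw [← h2] at hmul
  rw [← hmul]
  congr 1
  split
  · rw [coeff_X_add_one_pow]
  · rfl


lemma I2 (n r i : ℕ) :
    ∑ j ∈ range (n+r+1), (-1:ℝ)^j * ((n+r).choose j) * (j.choose r) * (j.choose i) =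
      (-1:ℝ)^(n+r) * (i.choose n) * ((n+r).choose i) := by
  by_cases hi : i ≤ n + r
  · have hsub : Finset.Ico i (n+r+1) ⊆ range (n+r+1) := by
      intro x hx; simp at hx ⊢; omega
    have hzero : ∀ x ∈ range (n+r+1), x ∉ Finset.Ico i (n+r+1) →
        (-1:ℝ)^x * ((n+r).choose x) * (x.choose r) * (x.choose i) = 0 := by
      intro x hx hx2
      simp only [mem_range] at hx
      simp only [Finset.mem_Ico] at hx2
      rw [Nat.choose_eq_zero_of_lt (by omega : x < i)]; simp
    rw [← Finset.sum_subset hsub hzero, Finset.sum_Ico_eq_sum_range]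
    have hre : n + r + 1 - i = (n + r - i) + 1 := by omega
    rw [hre]
    set M := n + r - i with hM
    have hrw : ∀ u ∈ range (M+1),
        (-1:ℝ)^(i+u) * ((n+r).choose (i+u)) * ((i+u).choose r) * ((i+u).choose i)
        = ((-1:ℝ)^i * ((n+r).choose i)) * ((-1:ℝ)^u * (M.choose u) * ((i+u).choose r)) := by
      intro u hu
      simp only [mem_range] at hu
      have h1 : i + u ≤ n + r := by omega
      have h2 : i ≤ i + u := by omega
      have h3 := Nat.choose_mul (n := n + r) h2
      simp only [Nat.add_sub_cancel_left] at h3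
      have h4 := congrArg (fun x : ℕ => (x : ℝ)) h3
      push_cast at h4
      rw [pow_add]
      have : ((n+r:ℕ).choose (i+u) : ℝ) * ((i+u).choose i) = ((n+r).choose i : ℝ) * (M.choose u) := by
        rw [hM]; exact h4
      linear_combination ((-1:ℝ)^i * (-1)^u * ((i+u).choose r)) * this
    rw [Finset.sum_congr rfl hrw, ← Finset.mul_sum]
    have := J M i r
    rw [this]
    by_cases hni : n ≤ i
    · have hMr : M ≤ r := by omega
      have hrM : r - M = i - n := by omega
      have hsymm : i.choose (i - n) = i.choose n := Nat.choose_symm hni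
      rw [if_pos hMr, hrM, hsymm]
      have hp : (-1:ℝ)^i * (-1:ℝ)^M = (-1)^(n+r) := by
        rw [← pow_add]
        congr 1
        omega
      linear_combination (((n+r).choose i : ℝ) * (i.choose n)) * hp
    · have hMr : ¬ (M ≤ r) := by omega
      rw [if_neg hMr, Nat.choose_eq_zero_of_lt (by omega : i < n)]
      simp
  · have hz : ∀ j ∈ range (n+r+1), (-1:ℝ)^j * ((n+r).choose j) * (j.choose r) * (j.choose i) = 0 := by
      intro j hj; simp only [mem_range] at hj
      rw [Nat.choose_eq_zero_of_lt (by omega : j < i)]; simp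
    rw [Finset.sum_congr rfl hz, Nat.choose_eq_zero_of_lt (by omega : n + r < i)]
    simp

lemma VDM' (r n i : ℕ) :
    ∑ t ∈ range (r+1), (if t ≤ i then ((r.choose t:ℝ) * (n.choose (i-t):ℝ)) else 0) =
      (((r+n).choose i : ℕ) : ℝ) := by
  have h := Nat.add_choose_eq r n i
  rw [Finset.Nat.sum_antidiagonal_eq_sum_range_succ_mk] at h
  have h2 : (((r+n).choose i : ℕ) : ℝ) = ∑ t ∈ range (i+1), ((r.choose t : ℝ) * (n.choose (i-t) : ℝ)) := by
    rw [h]; push_cast; rfl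
  rw [h2]
  rcases le_or_gt i r with hir | hir
  · -- range (i+1) ⊆ range (r+1)
    have hsub : range (i+1) ⊆ range (r+1) := by intro x hx; simp at hx ⊢; omega
    rw [show (∑ t ∈ range (i+1), ((r.choose t : ℝ) * (n.choose (i-t) : ℝ)))
        = ∑ t ∈ range (i+1), (if t ≤ i then ((r.choose t:ℝ) * (n.choose (i-t):ℝ)) else 0) from
      Finset.sum_congr rfl (fun t ht => by simp only [mem_range] at ht; rw [if_pos (by omega)])]
    refine (Finset.sum_subset hsub ?_).symm
    intro x hx hx2
    simp only [mem_range] at hx hx2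
    rw [if_neg (by omega)]
  · have hsub : range (r+1) ⊆ range (i+1) := by intro x hx; simp at hx ⊢; omega
    rw [show (∑ t ∈ range (r+1), (if t ≤ i then ((r.choose t:ℝ) * (n.choose (i-t):ℝ)) else 0))
        = ∑ t ∈ range (r+1), ((r.choose t:ℝ) * (n.choose (i-t):ℝ)) from
      Finset.sum_congr rfl (fun t ht => by simp only [mem_range] at ht; rw [if_pos (by omega)])]
    refine Finset.sum_subset hsub ?_
    intro x hx hx2
    simp only [mem_range] at hx hx2
    rw [Nat.choose_eq_zero_of_lt (by omega : r < x)]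
    simp

lemma DF1 (n r t : ℕ) :
    (n+r).descFactorial (n+t) * r.factorial = r.choose t * (t.factorial * (n+r).factorial) := by
  rcases le_or_gt t r with h | h
  · have h1 : (r - t).factorial * ((n+r).descFactorial (n+t)) = (n+r).factorial := by
      have := Nat.factorial_mul_descFactorial (show n + t ≤ n + r by omega)
      rwa [show n + r - (n + t) = r - t by omega] at this
    have h2 : r.choose t * t.factorial * (r-t).factorial = r.factorial :=
      Nat.choose_mul_factorial_mul_factorial h
    have h3 : (r-t).factorial > 0 := Nat.factorial_pos _
    apply Nat.eq_of_mul_eq_mul_left h3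
    calc (r-t).factorial * ((n+r).descFactorial (n+t) * r.factorial)
        = ((r-t).factorial * (n+r).descFactorial (n+t)) * r.factorial := by ring
      _ = (n+r).factorial * r.factorial := by rw [h1]
      _ = (r-t).factorial * (r.choose t * (t.factorial * (n+r).factorial)) := by
          rw [← h2]; ring
  · rw [Nat.choose_eq_zero_of_lt h, Nat.descFactorial_eq_zero_iff_lt.2 (by omega)]
    simp



lemma lag_coeff (n i : ℕ) :
    (laguerrePoly n).coeff i = (-1:ℝ)^i / i.factorial * (n.choose i) := by
  rw [laguerrePoly, finset_sum_coeff]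
  simp only [coeff_C_mul, coeff_X_pow]
  rcases le_or_gt i n with h | h
  · rw [Finset.sum_eq_single i]
    · simp
    · intro b hb hbi
      rw [if_neg (fun hc => hbi hc.symm), mul_zero]
    · intro hi; exact absurd (by simp; omega) hi
  · rw [Nat.choose_eq_zero_of_lt h]
    rw [Finset.sum_eq_zero]
    · simp
    · intro b hb
      simp only [mem_range] at hb
      rw [if_neg (by omega), mul_zero]

lemma X_pow_eq (m : ℕ) :
    (X : ℝ[X])^m = ∑ j ∈ range (m+1),
      ((m.factorial : ℝ) * (-1)^j * (m.choose j)) • laguerrePoly j := by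
  ext i
  rw [finset_sum_coeff]
  simp only [coeff_smul, smul_eq_mul, lag_coeff, coeff_X_pow]
  have hrw : ∀ j ∈ range (m+1),
      (m.factorial : ℝ) * (-1)^j * (m.choose j) * ((-1:ℝ)^i / i.factorial * (j.choose i))
      = ((m.factorial : ℝ) * (-1)^i / i.factorial) * ((-1:ℝ)^j * (m.choose j) * (j.choose i)) := by
    intro j hj; ring
  rw [Finset.sum_congr rfl hrw, ← Finset.mul_sum, I1]
  by_cases h : i = m
  · subst h
    rw [if_pos rfl, if_pos rfl]
    have h1 : (i.factorial : ℝ) ≠ 0 := Nat.cast_ne_zero.2 (Nat.factorial_ne_zero i)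
    have h2 : (-1:ℝ)^(i*2) = 1 := Even.neg_one_pow ⟨i, by ring⟩
    field_simp
    linear_combination (-(1:ℝ) - (i.factorial : ℝ)) * h2 + (i.factorial : ℝ) * h2
  · rw [if_neg h, if_neg (fun hc => h hc), mul_zero]

lemma INV (γ g : ℕ → ℝ)
    (hg : ∀ k, g k = ∑ j ∈ range (k + 1), (k.choose j : ℝ) * (-1) ^ (k - j) * γ j) :
    ∀ l, γ l = ∑ i ∈ range (l+1), (l.choose i : ℝ) * g i := by
  intro l
  have step : ∀ i ∈ range (l+1), (l.choose i : ℝ) * g i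
      = ∑ j ∈ range (l+1), (l.choose i : ℝ) * ((i.choose j : ℝ) * (-1)^(i-j) * γ j) := by
    intro i hi
    simp only [mem_range] at hi
    rw [hg i, Finset.mul_sum]
    refine (Finset.sum_subset (by intro x hx; simp at hx ⊢; omega) ?_)
    intro x hx hx2
    simp only [mem_range] at hx hx2
    rw [Nat.choose_eq_zero_of_lt (by omega : i < x)]
    simp
  rw [Finset.sum_congr rfl step, Finset.sum_comm]
  have inner : ∀ j ∈ range (l+1),
      ∑ i ∈ range (l+1), (l.choose i : ℝ) * ((i.choose j : ℝ) * (-1)^(i-j) * γ j)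
      = (if j = l then (-1:ℝ)^l else 0) * ((-1:ℝ)^j * γ j) := by
    intro j hj
    have hterm : ∀ i ∈ range (l+1), (l.choose i : ℝ) * ((i.choose j : ℝ) * (-1)^(i-j) * γ j)
        = ((-1:ℝ)^i * (l.choose i) * (i.choose j)) * ((-1:ℝ)^j * γ j) := by
      intro i hi
      rcases le_or_gt j i with h | h
      · have h2 : (-1:ℝ)^(i-j) = (-1)^i * (-1)^j := by
          have hh : (-1:ℝ)^(i-j) * (-1)^j = (-1)^i := by
            rw [← pow_add, Nat.sub_add_cancel h]
          have h3 : (-1:ℝ)^j * (-1)^j = 1 := by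
            rw [← pow_add]; exact Even.neg_one_pow ⟨j, rfl⟩
          calc (-1:ℝ)^(i-j) = (-1:ℝ)^(i-j) * ((-1:ℝ)^j * (-1)^j) := by rw [h3, mul_one]
            _ = (-1)^i * (-1)^j := by rw [← mul_assoc, hh]
        rw [h2]; ring
      · rw [Nat.choose_eq_zero_of_lt h]; simp
    rw [Finset.sum_congr rfl hterm, ← Finset.sum_mul, I1]
  rw [Finset.sum_congr rfl inner]
  rw [Finset.sum_eq_single l]
  · have h2 : (-1:ℝ)^(l*2) = 1 := Even.neg_one_pow ⟨l, by ring⟩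
    rw [if_pos rfl]
    linear_combination (-(γ l)) * h2
  · intro b hb hbl
    rw [if_neg hbl, zero_mul]
  · intro h; exact absurd (by simp) h

end Helpers

/-- values of the derivatives at 0 of the differential coefficients of a
Laguerre diagonal differential operator, and the resulting eigenvalue families b. -/
theorem stmt_16 (γ : ℕ → ℝ)
    (T : Polynomial ℝ →ₗ[ℝ] Polynomial ℝ)
    (hT : ∀ n, T (laguerrePoly n) = γ n • laguerrePoly n)
    (Q : ℕ → Polynomial ℝ)
    (hQ : ∀ p : Polynomial ℝ,
      T p = ∑ k ∈ Finset.range (p.natDegree + 1), Q k * (Polynomial.derivative^[k] p))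
    (g : ℕ → ℝ)
    (hg : ∀ k, g k = ∑ j ∈ Finset.range (k + 1), (k.choose j : ℝ) * (-1) ^ (k - j) * γ j)
    (b : ℕ → ℕ → ℝ)
    (hb : ∀ n m, b n m = ∑ k ∈ Finset.range (m + 1),
      (m.choose k : ℝ) * (Polynomial.derivative^[k] (Q (k + n))).eval 0) :
    (∀ n k : ℕ,
      (Polynomial.derivative^[k] (Q (k + n))).eval 0 =
        ((-1) ^ n / n.factorial) * ∑ j ∈ Finset.range (n + 1),
          (n.choose j : ℝ) * ((k + j).descFactorial n : ℝ) * g (k + j)) ∧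
    (∀ n m : ℕ,
      b n m = ∑ k ∈ Finset.range (m + 1), (m.choose k : ℝ) *
        (((-1) ^ n / n.factorial) * ∑ j ∈ Finset.range (n + 1),
          (n.choose j : ℝ) * ((k + j).descFactorial n : ℝ) * g (k + j))) := by
  have hγ := INV γ g hg
  -- operator applied to monomials, Laguerre side
  have hTX : ∀ m, T ((X:ℝ[X])^m) = ∑ j ∈ range (m+1),
      ((m.factorial : ℝ) * (-1)^j * (m.choose j) * γ j) • laguerrePoly j := by
    intro m
    rw [X_pow_eq m, map_sum]
    refine Finset.sum_congr rfl (fun j hj => ?_)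
    rw [map_smul, hT j, smul_smul]
  -- operator applied to monomials, differential-coefficient side
  have hQX : ∀ m, T ((X:ℝ[X])^m) = ∑ k ∈ range (m+1),
      Q k * (Polynomial.C (((m.descFactorial k : ℕ)) : ℝ) * X^(m-k)) := by
    intro m
    rw [hQ (X^m), natDegree_X_pow]
    refine Finset.sum_congr rfl (fun k hk => ?_)
    rw [Polynomial.iterate_derivative_X_pow_eq_C_mul]
  -- coefficient extraction
  have hcoeff : ∀ m r : ℕ,
      ∑ k ∈ range (m+1), (((m.descFactorial k : ℕ)) : ℝ) *
        (if m - k ≤ r then (Q k).coeff (r - (m-k)) else 0)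
      = ∑ j ∈ range (m+1), ((m.factorial:ℝ) * (-1)^j * (m.choose j) * γ j) *
          ((-1:ℝ)^r / r.factorial * (j.choose r)) := by
    intro m r
    have h := congrArg (fun p : ℝ[X] => p.coeff r) ((hQX m).symm.trans (hTX m))
    simp only [finset_sum_coeff, coeff_smul, smul_eq_mul] at h
    calc ∑ k ∈ range (m+1), (((m.descFactorial k : ℕ)) : ℝ) *
          (if m - k ≤ r then (Q k).coeff (r - (m-k)) else 0)
        = ∑ k ∈ range (m+1), (Q k * (Polynomial.C (((m.descFactorial k : ℕ)) : ℝ) * X^(m-k))).coeff r := by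
          refine Finset.sum_congr rfl (fun k _ => ?_)
          rw [show Q k * (Polynomial.C (((m.descFactorial k : ℕ)) : ℝ) * X^(m-k))
              = Polynomial.C (((m.descFactorial k : ℕ)) : ℝ) * (Q k * X^(m-k)) from by ring,
            coeff_C_mul, Polynomial.coeff_mul_X_pow']
      _ = ∑ j ∈ range (m+1), ((m.factorial:ℝ) * (-1)^j * (m.choose j) * γ j) * (laguerrePoly j).coeff r := h
      _ = ∑ j ∈ range (m+1), ((m.factorial:ℝ) * (-1)^j * (m.choose j) * γ j) *
          ((-1:ℝ)^r / r.factorial * (j.choose r)) := by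
          refine Finset.sum_congr rfl (fun j _ => ?_)
          rw [lag_coeff]
  -- the main claim on coefficients of Q
  have key : ∀ n t : ℕ, (Q (n + t)).coeff t =
      ((-1:ℝ)^n / (n.factorial * t.factorial)) * ∑ j ∈ range (n+1),
        (n.choose j:ℝ) * (((t+j).descFactorial n : ℕ):ℝ) * g (t+j) := by
    intro n
    set B : ℕ → ℝ := fun t => ((-1:ℝ)^n / (n.factorial * t.factorial)) * ∑ j ∈ range (n+1),
        (n.choose j:ℝ) * (((t+j).descFactorial n : ℕ):ℝ) * g (t+j) with hBdef
    have hREL : ∀ r : ℕ, ∑ t ∈ range (r+1),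
        ((((n+r).descFactorial (n+t) : ℕ)) : ℝ) * (Q (n+t)).coeff t
        = ∑ j ∈ range (n+r+1), (((n+r).factorial:ℝ) * (-1)^j * ((n+r).choose j) * γ j) *
          ((-1:ℝ)^r / r.factorial * (j.choose r)) := by
      intro r
      rw [← hcoeff (n+r) r]
      have hsub : Finset.Ico n (n+r+1) ⊆ range (n+r+1) := by
        intro x hx; simp at hx ⊢; omega
      have hout : ∀ k ∈ range (n+r+1), k ∉ Finset.Ico n (n+r+1) →
          ((((n+r).descFactorial k : ℕ)) : ℝ) *
            (if n + r - k ≤ r then (Q k).coeff (r - (n+r-k)) else 0) = 0 := by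
        intro k hk hk2
        simp only [mem_range] at hk
        simp only [Finset.mem_Ico] at hk2
        rw [if_neg (by omega)]
        simp
      rw [← Finset.sum_subset hsub hout, Finset.sum_Ico_eq_sum_range,
        show n + r + 1 - n = r + 1 from by omega]
      refine Finset.sum_congr rfl (fun t ht => ?_)
      simp only [mem_range] at ht
      rw [if_pos (by omega), show r - (n + r - (n + t)) = t from by omega]
    have hBt : ∀ t : ℕ, B t = ((-1:ℝ)^n / (n.factorial * t.factorial)) * ∑ j ∈ range (n+1),
        (n.choose j:ℝ) * (((t+j).descFactorial n : ℕ):ℝ) * g (t+j) := fun t => rfl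
    have hREL' : ∀ r : ℕ, ∑ t ∈ range (r+1),
        ((((n+r).descFactorial (n+t) : ℕ)) : ℝ) * B t
        = ∑ j ∈ range (n+r+1), (((n+r).factorial:ℝ) * (-1)^j * ((n+r).choose j) * γ j) *
          ((-1:ℝ)^r / r.factorial * (j.choose r)) := by
      intro r
      have step1 : ∀ t ∈ range (r+1),
          ((((n+r).descFactorial (n+t) : ℕ)) : ℝ) * B t
          = ∑ i ∈ range (n+r+1),
              (if t ≤ i then ((((n+r).descFactorial (n+t) : ℕ)) : ℝ) *
                ((-1:ℝ)^n / (n.factorial * t.factorial)) *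
                ((n.choose (i-t):ℝ) * ((i.descFactorial n : ℕ):ℝ)) else 0) * g i := by
        intro t ht
        simp only [mem_range] at ht
        have hsub : Finset.Ico t (t+n+1) ⊆ range (n+r+1) := by
          intro x hx; simp at hx ⊢; omega
        have hout : ∀ i ∈ range (n+r+1), i ∉ Finset.Ico t (t+n+1) →
            (if t ≤ i then ((((n+r).descFactorial (n+t) : ℕ)) : ℝ) *
                ((-1:ℝ)^n / (n.factorial * t.factorial)) *
                ((n.choose (i-t):ℝ) * ((i.descFactorial n : ℕ):ℝ)) else 0) * g i = 0 := by
          intro i hi hi2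
          simp only [mem_range] at hi
          simp only [Finset.mem_Ico] at hi2
          by_cases hti : t ≤ i
          · rw [if_pos hti, Nat.choose_eq_zero_of_lt (show n < i - t from by omega)]
            simp
          · rw [if_neg hti, zero_mul]
        rw [← Finset.sum_subset hsub hout, Finset.sum_Ico_eq_sum_range,
          show t+n+1-t = n+1 from by omega, hBt t, ← mul_assoc, Finset.mul_sum]
        refine Finset.sum_congr rfl (fun j hj => ?_)
        rw [if_pos (Nat.le_add_right t j), show t + j - t = j from by omega]
        ring
      rw [Finset.sum_congr rfl step1]
      have step2 : ∀ j ∈ range (n+r+1),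
          (((n+r).factorial:ℝ) * (-1)^j * ((n+r).choose j) * γ j) *
            ((-1:ℝ)^r / r.factorial * (j.choose r))
          = ∑ i ∈ range (n+r+1),
              ((((n+r).factorial:ℝ) * (-1)^j * ((n+r).choose j)) *
                ((-1:ℝ)^r / r.factorial * (j.choose r)) * (j.choose i:ℝ)) * g i := by
        intro j hj
        simp only [mem_range] at hj
        have hsub2 : range (j+1) ⊆ range (n+r+1) := by
          intro x hx; simp at hx ⊢; omega
        have hout2 : ∀ i ∈ range (n+r+1), i ∉ range (j+1) →
            ((((n+r).factorial:ℝ) * (-1)^j * ((n+r).choose j)) *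
                ((-1:ℝ)^r / r.factorial * (j.choose r)) * (j.choose i:ℝ)) * g i = 0 := by
          intro i hi hi2
          simp only [mem_range] at hi hi2
          rw [Nat.choose_eq_zero_of_lt (show j < i from by omega)]
          simp
        rw [← Finset.sum_subset hsub2 hout2, hγ j, Finset.mul_sum, Finset.sum_mul]
        refine Finset.sum_congr rfl (fun i hi => ?_)
        ring
      rw [Finset.sum_congr rfl step2]
      refine Finset.sum_comm.trans (Eq.trans ?_ Finset.sum_comm.symm)
      refine Finset.sum_congr rfl (fun i hi => ?_)
      rw [← Finset.sum_mul, ← Finset.sum_mul]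
      congr 1
      have hL : ∀ t ∈ range (r+1),
          (if t ≤ i then ((((n+r).descFactorial (n+t) : ℕ)) : ℝ) *
              ((-1:ℝ)^n / (n.factorial * t.factorial)) *
              ((n.choose (i-t):ℝ) * ((i.descFactorial n : ℕ):ℝ)) else 0)
          = ((-1:ℝ)^n * (i.choose n) * ((n+r).factorial / r.factorial)) *
              (if t ≤ i then ((r.choose t:ℝ) * (n.choose (i-t):ℝ)) else 0) := by
        intro t ht
        simp only [mem_range] at ht
        by_cases hti : t ≤ i
        · rw [if_pos hti, if_pos hti]
          have hdf : ((((n+r).descFactorial (n+t) : ℕ)) : ℝ) * (r.factorial:ℝ)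
              = (r.choose t:ℝ) * ((t.factorial:ℝ) * ((n+r).factorial:ℝ)) := by
            exact_mod_cast congrArg (Nat.cast : ℕ → ℝ) (DF1 n r t)
          have hdfi : ((i.descFactorial n : ℕ):ℝ) = (n.factorial:ℝ) * (i.choose n:ℝ) := by
            exact_mod_cast congrArg (Nat.cast : ℕ → ℝ) (Nat.descFactorial_eq_factorial_mul_choose i n)
          rw [hdfi]
          have h1 : (n.factorial:ℝ) ≠ 0 := Nat.cast_ne_zero.2 (Nat.factorial_ne_zero n)
          have h2 : (t.factorial:ℝ) ≠ 0 := Nat.cast_ne_zero.2 (Nat.factorial_ne_zero t)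
          have h3 : (r.factorial:ℝ) ≠ 0 := Nat.cast_ne_zero.2 (Nat.factorial_ne_zero r)
          field_simp
          linear_combination ((n.choose (i-t):ℝ) * (i.choose n)) * hdf
        · rw [if_neg hti, if_neg hti, mul_zero]
      rw [Finset.sum_congr rfl hL, ← Finset.mul_sum, VDM']
      have hR : ∀ j ∈ range (n+r+1),
          ((((n+r).factorial:ℝ) * (-1)^j * ((n+r).choose j)) *
            ((-1:ℝ)^r / r.factorial * (j.choose r)) * (j.choose i:ℝ))
          = (((n+r).factorial:ℝ) * ((-1:ℝ)^r / r.factorial)) *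
              ((-1:ℝ)^j * (((n+r).choose j):ℝ) * (j.choose r) * (j.choose i)) :=
        fun j _ => by ring
      rw [Finset.sum_congr rfl hR, ← Finset.mul_sum, I2,
        show r + n = n + r from by omega]
      have hs : (-1:ℝ)^r * (-1:ℝ)^(n+r) = (-1:ℝ)^n := by
        rw [← pow_add, show r+(n+r) = n + 2*r from by omega, pow_add, pow_mul]
        norm_num
      have h3 : (r.factorial:ℝ) ≠ 0 := Nat.cast_ne_zero.2 (Nat.factorial_ne_zero r)
      have h4 : (-1:ℝ)^(r*2) = 1 := Even.neg_one_pow ⟨r, by ring⟩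
      field_simp
      linear_combination (-((i.choose n:ℝ) * (((n+r).choose i):ℝ) * (-1:ℝ)^n)) * h4
    -- uniqueness by strong induction
    intro t
    induction t using Nat.strong_induction_on with
    | _ t IH =>
      have h1 := hREL t
      have h2 := hREL' t
      have h3 : ∑ s ∈ range (t+1),
          ((((n+t).descFactorial (n+s) : ℕ)) : ℝ) * ((Q (n+s)).coeff s - B s) = 0 := by
        have : ∑ s ∈ range (t+1),
            ((((n+t).descFactorial (n+s) : ℕ)) : ℝ) * ((Q (n+s)).coeff s - B s)
            = ∑ s ∈ range (t+1), (((((n+t).descFactorial (n+s) : ℕ)) : ℝ) * (Q (n+s)).coeff s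
              - ((((n+t).descFactorial (n+s) : ℕ)) : ℝ) * B s) :=
          Finset.sum_congr rfl (fun s _ => by ring)
        rw [this, Finset.sum_sub_distrib, h1, h2, sub_self]
      rw [Finset.sum_range_succ] at h3
      have h4 : ∀ s ∈ range t,
          ((((n+t).descFactorial (n+s) : ℕ)) : ℝ) * ((Q (n+s)).coeff s - B s) = 0 := by
        intro s hs
        simp only [mem_range] at hs
        rw [IH s hs, sub_self, mul_zero]
      rw [Finset.sum_eq_zero h4, zero_add] at h3
      have h5 : ((((n+t).descFactorial (n+t) : ℕ)) : ℝ) ≠ 0 := by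
        rw [Nat.descFactorial_self]
        exact Nat.cast_ne_zero.2 (Nat.factorial_ne_zero _)
      have h6 := mul_eq_zero.1 h3
      rcases h6 with h6 | h6
      · exact absurd h6 h5
      · exact (sub_eq_zero.mp h6).trans (hBt t)
  have part1 : ∀ n k : ℕ,
      (Polynomial.derivative^[k] (Q (k + n))).eval 0 =
        ((-1:ℝ) ^ n / n.factorial) * ∑ j ∈ Finset.range (n + 1),
          (n.choose j : ℝ) * ((k + j).descFactorial n : ℝ) * g (k + j) := by
    intro n k
    have he : (Polynomial.derivative^[k] (Q (k+n))).eval 0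
        = (k.factorial:ℝ) * (Q (k+n)).coeff k := by
      rw [← Polynomial.coeff_zero_eq_eval_zero, Polynomial.coeff_iterate_derivative]
      simp [Nat.descFactorial_self, nsmul_eq_mul]
    rw [he, show k + n = n + k from by omega, key n k]
    have hk : (k.factorial:ℝ) ≠ 0 := Nat.cast_ne_zero.2 (Nat.factorial_ne_zero k)
    have hn : (n.factorial:ℝ) ≠ 0 := Nat.cast_ne_zero.2 (Nat.factorial_ne_zero n)
    field_simp
  refine ⟨part1, fun n m => ?_⟩
  rw [hb n m]
  exact Finset.sum_congr rfl (fun k _ => by rw [part1 n k])
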